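/- For every square integrable f : [0,1]^n → ℝ and every k ∈ {1,...,n}, ∫_{[0,1]^n} f(x) · x_{(k)} dx = ∫_{[0,1]^n} f(x) dx − ∑_{S ⊆ {1,...,n}, |S| ≥ k} (−1)^{|S|−k} binom(|S|−1, k−1) ∫_0^1 ( ∫_{B_{S,y}} f(x) dx ) dy, where B_{S,y} = {x ∈ [0,1]^n : x_i ≤ y for all i ∈ S}. -/

import Mathlib

open MeasureTheory Finset

/-- The `k`-th order statistic of `x : Fin n → ℝ`, with conventions
`oStat x 0 = 0` and `oStat x k = 1` for `k > n`. For `1 ≤ k ≤ n` it is the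
`k`-th smallest coordinate of `x`. -/
noncomputable def oStat {n : ℕ} (x : Fin n → ℝ) (k : ℕ) : ℝ :=
  if k = 0 then 0
  else if k ≤ n then ((Finset.univ.val.map x).sort (· ≤ ·)).getD (k - 1) 0
  else 1

/-- The `k`-th order statistic of the subfamily `(x i)_{i ∈ S}`. -/
noncomputable def oStatS {n : ℕ} (S : Finset (Fin n)) (x : Fin n → ℝ) (k : ℕ) : ℝ :=
  ((S.val.map x).sort (· ≤ ·)).getD (k - 1) 0

lemma alt_sum_real (n : ℕ) :
    ∑ i ∈ range (n+1), (-1:ℝ)^i * (n.choose i : ℝ) = if n = 0 then 1 else 0 := by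
  have := @Int.alternating_sum_range_choose n
  have h2 : ((∑ i ∈ range (n + 1), (-1 : ℤ) ^ i * ↑(n.choose i) : ℤ) : ℝ)
      = ((if n = 0 then 1 else 0 : ℤ) : ℝ) := by rw [this]
  push_cast at h2
  exact_mod_cast h2

lemma auxH (m r : ℕ) :
    ∑ u ∈ range (m+1), (-1:ℝ)^(u+r) * (u.choose r : ℝ) * (m.choose u : ℝ) =
      if m = r then 1 else 0 := by
  rcases lt_or_ge m r with h | h
  · rw [if_neg (by omega)]
    refine Finset.sum_eq_zero fun u hu => ?_
    rw [mem_range] at hu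
    rw [Nat.choose_eq_zero_of_lt (by omega)]
    simp
  · have hsplit : ∑ u ∈ range (m+1), (-1:ℝ)^(u+r) * (u.choose r : ℝ) * (m.choose u : ℝ)
        = ∑ u ∈ Finset.Ico r (m+1), (-1:ℝ)^(u+r) * (u.choose r : ℝ) * (m.choose u : ℝ) := by
      rw [range_eq_Ico, ← Finset.sum_Ico_consecutive _ (Nat.zero_le r) (by omega)]
      have : ∑ u ∈ Finset.Ico 0 r, (-1:ℝ)^(u+r) * (u.choose r : ℝ) * (m.choose u : ℝ) = 0 := by
        refine Finset.sum_eq_zero fun u hu => ?_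
        rw [Finset.mem_Ico] at hu
        rw [Nat.choose_eq_zero_of_lt (by omega)]
        simp
      rw [this, zero_add]
    rw [hsplit, Finset.sum_Ico_eq_sum_range]
    have hterm : ∀ v, (-1:ℝ)^(r+v+r) * ((r+v).choose r : ℝ) * (m.choose (r+v) : ℝ)
        = (m.choose r : ℝ) * ((-1:ℝ)^v * ((m-r).choose v : ℝ)) := by
      intro v
      have hpow : (-1:ℝ)^(r+v+r) = (-1:ℝ)^v := by
        have : r + v + r = v + 2*r := by omega
        rw [this, pow_add, pow_mul]
        simp
      by_cases hv : r + v ≤ m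
      · have := Nat.choose_mul (n := m) (k := r+v) (s := r) (Nat.le_add_right r v)
        have hcast : (m.choose (r+v) : ℝ) * ((r+v).choose r : ℝ)
            = (m.choose r : ℝ) * ((m-r).choose (r+v-r) : ℝ) := by exact_mod_cast this
        rw [hpow]
        have : r + v - r = v := by omega
        rw [this] at hcast
        linear_combination ((-1:ℝ)^v) * hcast
      · rw [Nat.choose_eq_zero_of_lt (show m < r + v by omega),
           Nat.choose_eq_zero_of_lt (show m - r < v by omega)]
        simp
    rw [Finset.sum_congr rfl fun v _ => hterm v, ← Finset.mul_sum]
    have : m + 1 - r = (m - r) + 1 := by omega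
    rw [this, alt_sum_real]
    rcases eq_or_lt_of_le h with rfl | h2
    · simp
    · rw [if_neg (by omega), if_neg (by omega), mul_zero]

lemma auxG (a r : ℕ) :
    ∑ u ∈ range a, (-1:ℝ)^(u+r) * (u.choose r : ℝ) * (a.choose (u+1) : ℝ) =
      if r < a then 1 else 0 := by
  induction a with
  | zero => simp
  | succ a ih =>
    have hterm : ∀ u, (-1:ℝ)^(u+r) * (u.choose r : ℝ) * ((a+1).choose (u+1) : ℝ)
        = (-1:ℝ)^(u+r) * (u.choose r : ℝ) * (a.choose u : ℝ)
          + (-1:ℝ)^(u+r) * (u.choose r : ℝ) * (a.choose (u+1) : ℝ) := by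
      intro u
      rw [Nat.choose_succ_succ a u]
      push_cast
      ring
    rw [Finset.sum_congr rfl fun u _ => hterm u, Finset.sum_add_distrib]
    rw [auxH a r, Finset.sum_range_succ]
    rw [Nat.choose_succ_self a]
    push_cast
    rw [mul_zero, add_zero, ih]
    rcases lt_trichotomy r a with h | rfl | h
    · rw [if_neg (by omega), if_pos h, if_pos (by omega)]; ring
    · simp
    · rw [if_neg (by omega), if_neg (by omega), if_neg (by omega)]; ring

lemma combIdent {α : Type*} [DecidableEq α] (k : ℕ) (hk : 1 ≤ k) (A : Finset α) :
    ∑ S ∈ A.powerset.filter (fun S => k ≤ S.card),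
      (-1:ℝ)^(S.card - k) * ((S.card - 1).choose (k-1) : ℝ) =
    if k ≤ A.card then 1 else 0 := by
  obtain ⟨r, rfl⟩ : ∃ r, k = r + 1 := ⟨k - 1, by omega⟩
  rw [Finset.sum_filter]
  rw [Finset.sum_powerset]
  have hinner : ∀ j ∈ range (A.card + 1),
      (∑ S ∈ Finset.powersetCard j A, (if r + 1 ≤ S.card then
        (-1:ℝ)^(S.card - (r+1)) * ((S.card - 1).choose (r+1-1) : ℝ) else 0))
      = (A.card.choose j : ℝ) * (if r + 1 ≤ j then (-1:ℝ)^(j - (r+1)) * ((j-1).choose r : ℝ) else 0) := by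
    intro j _
    rw [Finset.sum_congr rfl (fun S hS => by
      rw [(Finset.mem_powersetCard.1 hS).2]), Finset.sum_const, Finset.card_powersetCard]
    simp [nsmul_eq_mul]
  rw [Finset.sum_congr rfl hinner, Finset.sum_range_succ']
  rw [if_neg (by omega), mul_zero, add_zero]
  have hterm : ∀ u, (A.card.choose (u+1) : ℝ) * (if r + 1 ≤ u + 1 then
      (-1:ℝ)^(u + 1 - (r+1)) * ((u+1-1).choose r : ℝ) else 0)
      = (-1:ℝ)^(u+r) * (u.choose r : ℝ) * (A.card.choose (u+1) : ℝ) := by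
    intro u
    by_cases hu : r ≤ u
    · rw [if_pos (by omega)]
      have h1 : u + 1 - (r + 1) = u - r := by omega
      have h2 : u + 1 - 1 = u := by omega
      have hpow : (-1:ℝ)^(u - r) = (-1:ℝ)^(u+r) := by
        have : u + r = (u - r) + 2*r := by omega
        rw [this, pow_add, pow_mul]
        simp
      rw [h1, h2, hpow]; ring
    · rw [if_neg (by omega), Nat.choose_eq_zero_of_lt (show u < r by omega)]
      simp
  rw [Finset.sum_congr rfl fun u _ => hterm u, auxG]
  by_cases h : r + 1 ≤ A.card
  · rw [if_pos (by omega), if_pos h]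
  · rw [if_neg (by omega), if_neg h]


lemma sorted_getD_le_iff {l : List ℝ} (hl : l.Pairwise (· ≤ ·)) {i : ℕ} (hi : i < l.length)
    (y : ℝ) : l.getD i 0 ≤ y ↔ i + 1 ≤ l.countP (fun b => decide (b ≤ y)) := by
  have hgetD : l.getD i 0 = l[i] := by
    simp [List.getD_eq_getElem?_getD, List.getElem?_eq_getElem hi]
  rw [hgetD]
  constructor
  · intro h
    have hsplit := List.countP_append (p := fun b => decide (b ≤ y)) (l₁ := l.take (i+1)) (l₂ := l.drop (i+1))
    rw [List.take_append_drop] at hsplit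
    have htake : (l.take (i+1)).countP (fun b => decide (b ≤ y)) = (l.take (i+1)).length := by
      rw [List.countP_eq_length]
      intro a ha
      rw [List.mem_take_iff_getElem] at ha
      obtain ⟨j, hj, rfl⟩ := ha
      have hj' : j ≤ i := by omega
      have : l[j] ≤ l[i] := by
        have := hl.rel_get_of_le (a := ⟨j, by omega⟩) (b := ⟨i, hi⟩) (by exact hj')
        simpa using this
      simp only [decide_eq_true_eq]
      linarith
    have hlen : (l.take (i+1)).length = i + 1 := by
      rw [List.length_take]; omega
    rw [hsplit]
    omega
  · intro h
    by_contra hcon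
    push_neg at hcon
    have hsplit := List.countP_append (p := fun b => decide (b ≤ y)) (l₁ := l.take i) (l₂ := l.drop i)
    rw [List.take_append_drop] at hsplit
    have hdrop : (l.drop i).countP (fun b => decide (b ≤ y)) = 0 := by
      rw [List.countP_eq_zero]
      intro a ha
      rw [List.mem_iff_getElem] at ha
      obtain ⟨j, hj, rfl⟩ := ha
      have hj' : i + j < l.length := by rw [List.length_drop] at hj; omega
      have hdd : (l.drop i)[j] = l[i+j]'hj' := by rw [List.getElem_drop]
      rw [hdd]
      have : l[i] ≤ l[i + j] := by
        have := hl.rel_get_of_le (a := ⟨i, hi⟩) (b := ⟨i + j, hj'⟩) (by simp)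
        simpa using this
      simp only [decide_eq_true_eq]
      push_neg
      linarith
    have := List.countP_le_length (p := fun b => decide (b ≤ y)) (l := l.take i)
    rw [List.length_take] at this
    omega


lemma oStat_le_iff {n k : ℕ} (hk : 1 ≤ k) (hkn : k ≤ n) (x : Fin n → ℝ) (y : ℝ) :
    oStat x k ≤ y ↔ k ≤ (univ.filter (fun i => x i ≤ y)).card := by
  have hk0 : k ≠ 0 := by omega
  rw [oStat, if_neg hk0, if_pos hkn]
  set L := ((Finset.univ.val.map x).sort (· ≤ ·)) with hL
  have hlen : L.length = n := by
    rw [hL, Multiset.length_sort, Multiset.card_map]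
    simp
  have hsorted : L.Pairwise (· ≤ ·) := Multiset.pairwise_sort _ _
  have hcount : L.countP (fun b => decide (b ≤ y)) = (univ.filter (fun i => x i ≤ y)).card := by
    have h1 : Multiset.countP (fun b => b ≤ y) (Finset.univ.val.map x)
        = L.countP (fun b => decide (b ≤ y)) := by
      conv_lhs => rw [← Multiset.sort_eq (Finset.univ.val.map x) (· ≤ ·)]
      exact Multiset.coe_countP (p := fun b => b ≤ y) L
    rw [← h1, Multiset.countP_map]
    rfl
  rw [sorted_getD_le_iff hsorted (by omega) y, hcount]
  omega


lemma indicator_ident {n k : ℕ} (hk : 1 ≤ k) (hkn : k ≤ n) (x : Fin n → ℝ) (y : ℝ) :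
    (if oStat x k ≤ y then (1:ℝ) else 0) =
      ∑ S ∈ Finset.univ.powerset.filter (fun S : Finset (Fin n) => k ≤ S.card),
        (-1:ℝ)^(S.card - k) * ((S.card - 1).choose (k-1) : ℝ) *
          (if ∀ i ∈ S, x i ≤ y then 1 else 0) := by
  classical
  set A := univ.filter (fun i => x i ≤ y) with hA
  have hSub : ∀ S : Finset (Fin n), (∀ i ∈ S, x i ≤ y) ↔ S ⊆ A := by
    intro S
    constructor
    · intro h i hi
      rw [hA, mem_filter]
      exact ⟨mem_univ i, h i hi⟩
    · intro h i hi
      exact (mem_filter.1 (h hi)).2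
  have hRHS : ∑ S ∈ Finset.univ.powerset.filter (fun S : Finset (Fin n) => k ≤ S.card),
      (-1:ℝ)^(S.card - k) * ((S.card - 1).choose (k-1) : ℝ) *
        (if ∀ i ∈ S, x i ≤ y then 1 else 0)
      = ∑ S ∈ A.powerset.filter (fun S => k ≤ S.card),
        (-1:ℝ)^(S.card - k) * ((S.card - 1).choose (k-1) : ℝ) := by
    have h1 : ∀ S ∈ Finset.univ.powerset.filter (fun S : Finset (Fin n) => k ≤ S.card),
        (-1:ℝ)^(S.card - k) * ((S.card - 1).choose (k-1) : ℝ) *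
          (if ∀ i ∈ S, x i ≤ y then 1 else 0)
        = if S ⊆ A then (-1:ℝ)^(S.card - k) * ((S.card - 1).choose (k-1) : ℝ) else 0 := by
      intro S _
      by_cases h : S ⊆ A
      · rw [if_pos h, if_pos ((hSub S).2 h), mul_one]
      · rw [if_neg h, if_neg (fun hc => h ((hSub S).1 hc)), mul_zero]
    rw [Finset.sum_congr rfl h1, ← Finset.sum_filter]
    congr 1
    ext S
    simp only [Finset.mem_filter, Finset.mem_powerset]
    constructor
    · rintro ⟨⟨-, h2⟩, h3⟩
      exact ⟨h3, h2⟩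
    · rintro ⟨h1, h2⟩
      exact ⟨⟨Finset.subset_univ S, h2⟩, h1⟩
  rw [hRHS, combIdent k hk A]
  by_cases h : oStat x k ≤ y
  · rw [if_pos h, if_pos ((oStat_le_iff hk hkn x y).1 h)]
  · rw [if_neg h, if_neg (fun hc => h ((oStat_le_iff hk hkn x y).2 hc))]

lemma integral_ind_Ici {c : ℝ} (h0 : 0 ≤ c) (h1 : c ≤ 1) :
    ∫ y in Set.Icc (0:ℝ) 1, (if c ≤ y then (1:ℝ) else 0) = 1 - c := by
  have h2 : (fun y => if c ≤ y then (1:ℝ) else 0) = (Set.Ici c).indicator (fun _ => 1) := by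
    ext y
    by_cases h : c ≤ y <;> simp [Set.indicator_apply, h, Set.mem_Ici]
  rw [h2, setIntegral_indicator measurableSet_Ici, setIntegral_const]
  have h3 : Set.Icc (0:ℝ) 1 ∩ Set.Ici c = Set.Icc c 1 := by
    ext z
    simp only [Set.mem_inter_iff, Set.mem_Icc, Set.mem_Ici]
    constructor
    · rintro ⟨⟨-, hz1⟩, hz2⟩
      exact ⟨hz2, hz1⟩
    · rintro ⟨hz1, hz2⟩
      exact ⟨⟨by linarith, hz2⟩, hz1⟩
  rw [h3, measureReal_def, Real.volume_Icc, smul_eq_mul, mul_one, ENNReal.toReal_ofReal (by linarith)]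

lemma oStat_mem {n k : ℕ} (hk : 1 ≤ k) (hkn : k ≤ n) {x : Fin n → ℝ}
    (hx : x ∈ Set.Icc (0 : Fin n → ℝ) 1) : 0 ≤ oStat x k ∧ oStat x k ≤ 1 := by
  rw [oStat, if_neg (by omega : k ≠ 0), if_pos hkn]
  set L := ((Finset.univ.val.map x).sort (· ≤ ·)) with hL
  have hlen : L.length = n := by
    rw [hL, Multiset.length_sort, Multiset.card_map]
    simp
  have hidx : k - 1 < L.length := by omega
  have hgetD : L.getD (k-1) 0 = L[k-1] := by
    simp [List.getD_eq_getElem?_getD, List.getElem?_eq_getElem hidx]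
  rw [hgetD]
  have hmem : L[k-1] ∈ L := List.getElem_mem _
  have h2 : L[k-1] ∈ (Finset.univ.val.map x) := by
    exact (Multiset.mem_sort (fun x1 x2 : ℝ => x1 ≤ x2) (s := Multiset.map x univ.val)
      (a := L[k-1])).1 hmem
  obtain ⟨i, -, hxi⟩ := Multiset.mem_map.1 h2
  rw [← hxi]
  exact ⟨hx.1 i, hx.2 i⟩

lemma icc01_finite : IsFiniteMeasure (volume.restrict (Set.Icc (0:ℝ) 1)) := by
  constructor
  rw [Measure.restrict_apply_univ, Real.volume_Icc]
  exact ENNReal.ofReal_lt_top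

lemma indS_eq {n : ℕ} {S : Finset (Fin n)} (hS : S.Nonempty) (x : Fin n → ℝ) :
    (fun y : ℝ => if ∀ i ∈ S, x i ≤ y then (1:ℝ) else 0)
      = fun y => if S.sup' hS x ≤ y then (1:ℝ) else 0 := by
  ext y
  congr 1
  simp only [eq_iff_iff]
  exact (Finset.sup'_le_iff hS x).symm

lemma indS_integrable {n : ℕ} {S : Finset (Fin n)} (hS : S.Nonempty) (x : Fin n → ℝ) :
    Integrable (fun y : ℝ => if ∀ i ∈ S, x i ≤ y then (1:ℝ) else 0)
      (volume.restrict (Set.Icc (0:ℝ) 1)) := by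
  haveI := icc01_finite
  rw [indS_eq hS x]
  have h2 : (fun y : ℝ => if S.sup' hS x ≤ y then (1:ℝ) else 0)
      = (Set.Ici (S.sup' hS x)).indicator (fun _ => 1) := by
    ext y
    by_cases h : S.sup' hS x ≤ y <;> simp [Set.indicator_apply, h, Set.mem_Ici]
  rw [h2]
  exact (integrable_const 1).indicator measurableSet_Ici

lemma oStat_eq {n k : ℕ} (hk : 1 ≤ k) (hkn : k ≤ n) {x : Fin n → ℝ}
    (hx : x ∈ Set.Icc (0 : Fin n → ℝ) 1) :
    oStat x k = 1 - ∑ S ∈ Finset.univ.powerset.filter (fun S : Finset (Fin n) => k ≤ S.card),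
      (-1:ℝ)^(S.card - k) * ((S.card - 1).choose (k-1) : ℝ) *
        ∫ y in Set.Icc (0:ℝ) 1, (if ∀ i ∈ S, x i ≤ y then (1:ℝ) else 0) := by
  obtain ⟨h0, h1⟩ := oStat_mem hk hkn hx
  have key : ∫ y in Set.Icc (0:ℝ) 1, (if oStat x k ≤ y then (1:ℝ) else 0)
      = ∑ S ∈ Finset.univ.powerset.filter (fun S : Finset (Fin n) => k ≤ S.card),
        (-1:ℝ)^(S.card - k) * ((S.card - 1).choose (k-1) : ℝ) *
          ∫ y in Set.Icc (0:ℝ) 1, (if ∀ i ∈ S, x i ≤ y then (1:ℝ) else 0) := by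
    have hfun : (fun y : ℝ => if oStat x k ≤ y then (1:ℝ) else 0)
        = fun y => ∑ S ∈ Finset.univ.powerset.filter (fun S : Finset (Fin n) => k ≤ S.card),
          (-1:ℝ)^(S.card - k) * ((S.card - 1).choose (k-1) : ℝ) *
            (if ∀ i ∈ S, x i ≤ y then 1 else 0) :=
      funext fun y => indicator_ident hk hkn x y
    rw [hfun, integral_finset_sum]
    · refine Finset.sum_congr rfl fun S hS => ?_
      have hSne : S.Nonempty := Finset.card_pos.1 (by
        have := (Finset.mem_filter.1 hS).2
        omega)
      rw [MeasureTheory.integral_const_mul]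
    · intro S hS
      have hSne : S.Nonempty := Finset.card_pos.1 (by
        have := (Finset.mem_filter.1 hS).2
        omega)
      exact (indS_integrable hSne x).const_mul _
  have h2 := integral_ind_Ici h0 h1
  rw [key] at h2
  linarith

theorem stmt7 (n k : ℕ) (hk : 1 ≤ k) (hkn : k ≤ n) (f : (Fin n → ℝ) → ℝ)
    (hf : MemLp f 2 (volume.restrict (Set.Icc (0 : Fin n → ℝ) 1))) :
    (∫ x in Set.Icc (0 : Fin n → ℝ) 1, f x * oStat x k) =
      (∫ x in Set.Icc (0 : Fin n → ℝ) 1, f x) -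
      ∑ S ∈ Finset.univ.powerset.filter (fun S : Finset (Fin n) => k ≤ S.card),
        (-1 : ℝ) ^ (S.card - k) * (Nat.choose (S.card - 1) (k - 1) : ℝ) *
          ∫ y in Set.Icc (0 : ℝ) 1,
            ∫ x in {x : Fin n → ℝ | x ∈ Set.Icc (0 : Fin n → ℝ) 1 ∧ ∀ i ∈ S, x i ≤ y}, f x := by
  classical
  set μ := volume.restrict (Set.Icc (0 : Fin n → ℝ) 1) with hμ
  set ν := volume.restrict (Set.Icc (0:ℝ) 1) with hν
  haveI hμfin : IsFiniteMeasure μ := by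
    constructor
    rw [hμ, Measure.restrict_apply_univ]
    exact isCompact_Icc.measure_lt_top
  haveI hνfin : IsFiniteMeasure ν := icc01_finite
  have hfi : Integrable f μ := hf.integrable one_le_two
  -- per S data
  set 𝒮 := Finset.univ.powerset.filter (fun S : Finset (Fin n) => k ≤ S.card) with h𝒮
  set c : Finset (Fin n) → ℝ :=
    fun S => (-1 : ℝ) ^ (S.card - k) * (Nat.choose (S.card - 1) (k - 1) : ℝ) with hc
  set F : Finset (Fin n) → ((Fin n → ℝ) × ℝ) → ℝ :=
    fun S p => f p.1 * (if ∀ i ∈ S, p.1 i ≤ p.2 then (1:ℝ) else 0) with hF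
  have hEmeas : ∀ S : Finset (Fin n),
      MeasurableSet {p : (Fin n → ℝ) × ℝ | ∀ i ∈ S, p.1 i ≤ p.2} := by
    intro S
    have : {p : (Fin n → ℝ) × ℝ | ∀ i ∈ S, p.1 i ≤ p.2}
        = ⋂ i ∈ S, {p : (Fin n → ℝ) × ℝ | p.1 i ≤ p.2} := by
      ext p; simp
    rw [this]
    exact MeasurableSet.biInter S.countable_toSet fun i _ =>
      measurableSet_le (measurable_fst.eval) measurable_snd
  have hFint : ∀ S : Finset (Fin n), Integrable (F S) (μ.prod ν) := by
    intro S
    have hfst : Integrable (fun p : (Fin n → ℝ) × ℝ => f p.1) (μ.prod ν) := by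
      have := hfi.mul_prod (integrable_const (1:ℝ) (μ := ν))
      simpa using this
    have hind : (fun p : (Fin n → ℝ) × ℝ => (if ∀ i ∈ S, p.1 i ≤ p.2 then (1:ℝ) else 0))
        = Set.indicator {p : (Fin n → ℝ) × ℝ | ∀ i ∈ S, p.1 i ≤ p.2} (fun _ => 1) := by
      ext p
      by_cases h : ∀ i ∈ S, p.1 i ≤ p.2 <;> simp [Set.indicator_apply, h]
    have haesm : AEStronglyMeasurable (F S) (μ.prod ν) := by
      apply AEStronglyMeasurable.mul hfst.aestronglyMeasurable
      rw [hind]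
      exact ((measurable_const.indicator (hEmeas S)).aestronglyMeasurable)
    refine Integrable.mono' hfst.norm haesm (Filter.Eventually.of_forall fun p => ?_)
    rw [hF]
    simp only [norm_mul]
    by_cases h : ∀ i ∈ S, p.1 i ≤ p.2
    · rw [if_pos h]
      simp
    · rw [if_neg h]
      simp [abs_nonneg]
  have hgS_int : ∀ S : Finset (Fin n),
      Integrable (fun x => ∫ y, F S (x, y) ∂ν) μ := fun S => (hFint S).integral_prod_left
  have hgS_eq : ∀ (S : Finset (Fin n)) (x : Fin n → ℝ),
      (∫ y, F S (x, y) ∂ν)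
        = f x * ∫ y in Set.Icc (0:ℝ) 1, (if ∀ i ∈ S, x i ≤ y then (1:ℝ) else 0) := by
    intro S x
    rw [hν]
    simp only [hF]
    exact MeasureTheory.integral_const_mul _ _
  -- step 1 : rewrite the integrand using oStat_eq
  have step1 : (∫ x in Set.Icc (0 : Fin n → ℝ) 1, f x * oStat x k)
      = ∫ x, (f x - ∑ S ∈ 𝒮, c S * (∫ y, F S (x, y) ∂ν)) ∂μ := by
    rw [hμ]
    apply setIntegral_congr_fun measurableSet_Icc
    intro x hx
    dsimp only
    rw [oStat_eq hk hkn hx, mul_sub, mul_one, Finset.mul_sum]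
    congr 1
    refine Finset.sum_congr rfl fun S hS => ?_
    rw [hgS_eq S x]
    ring
  rw [step1]
  -- step 2 : split the integral
  have step2 : (∫ x, (f x - ∑ S ∈ 𝒮, c S * (∫ y, F S (x, y) ∂ν)) ∂μ)
      = (∫ x, f x ∂μ) - ∑ S ∈ 𝒮, c S * ∫ x, (∫ y, F S (x, y) ∂ν) ∂μ := by
    rw [integral_sub hfi (integrable_finset_sum _ fun S _ => (hgS_int S).const_mul (c S)),
      integral_finset_sum _ fun S _ => (hgS_int S).const_mul (c S)]
    congr 1
    exact Finset.sum_congr rfl fun S _ => MeasureTheory.integral_const_mul _ _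
  rw [step2]
  congr 1
  refine Finset.sum_congr rfl fun S hS => ?_
  congr 1
  -- step 3 : Fubini for this S
  have swap := MeasureTheory.integral_integral_swap (f := fun x y => F S (x, y))
    (μ := μ) (ν := ν) (by exact hFint S)
  rw [swap]
  -- step 4 : identify the inner integral
  rw [hν]
  apply setIntegral_congr_fun measurableSet_Icc
  intro y _
  dsimp only
  have hsetmeas : MeasurableSet {x : Fin n → ℝ | ∀ i ∈ S, x i ≤ y} := by
    have : {x : Fin n → ℝ | ∀ i ∈ S, x i ≤ y} = ⋂ i ∈ S, {x : Fin n → ℝ | x i ≤ y} := by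
      ext x; simp
    rw [this]
    exact MeasurableSet.biInter S.countable_toSet fun i _ =>
      measurableSet_le (measurable_pi_apply i) measurable_const
  have hind : (fun x => F S (x, y)) = Set.indicator {x : Fin n → ℝ | ∀ i ∈ S, x i ≤ y} f := by
    ext x
    rw [hF]
    by_cases h : ∀ i ∈ S, x i ≤ y <;> simp [Set.indicator_apply, h]
  rw [hind, integral_indicator hsetmeas, hμ, Measure.restrict_restrict hsetmeas]
  have hset : {x : Fin n → ℝ | ∀ i ∈ S, x i ≤ y} ∩ Set.Icc 0 1
      = {x : Fin n → ℝ | x ∈ Set.Icc (0 : Fin n → ℝ) 1 ∧ ∀ i ∈ S, x i ≤ y} := by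
    ext x
    simp only [Set.mem_inter_iff, Set.mem_setOf_eq]
    tauto
  rw [hset]
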